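/- Let g₁,…,g_T ∈ ℝ^d and define for each coordinate i, s_{t,i} = ‖(g_{1,i},…,g_{t,i})‖₂ (the ℓ₂ norm of the history of coordinate i), and H_t = δI + diag(s_t) with δ ≥ max_t ‖g_t‖_∞. Then Σ_{t=1}^{T} ‖g_t‖²_{H_{t−1}^{−1}} ≤ 2·Σ_{i=1}^{d} ‖(g_{1,i},…,g_{T,i})‖₂, where ‖x‖²_{H^{−1}} = xᵀH^{−1}x and H₀ = δI. -/
import Mathlib

lemma key_step (δ S a : ℝ) (hδ0 : 0 ≤ δ) (hS : 0 ≤ S) (ha : |a| ≤ δ) :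
    a ^ 2 / (δ + Real.sqrt S) ≤ 2 * (Real.sqrt (S + a ^ 2) - Real.sqrt S) := by
  set u := Real.sqrt S with hu
  set v := Real.sqrt (S + a ^ 2) with hv
  have hu0 : 0 ≤ u := Real.sqrt_nonneg _
  have hv0 : 0 ≤ v := Real.sqrt_nonneg _
  have hu2 : u ^ 2 = S := Real.sq_sqrt hS
  have hv2 : v ^ 2 = S + a ^ 2 := Real.sq_sqrt (by positivity)
  have hvu : v ≤ u + δ := by
    have h1 : S + a ^ 2 ≤ (u + δ) ^ 2 := by
      have : a ^ 2 ≤ δ ^ 2 := by nlinarith [abs_nonneg a, sq_abs a]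
      nlinarith
    calc v ≤ Real.sqrt ((u + δ) ^ 2) := Real.sqrt_le_sqrt h1
      _ = u + δ := Real.sqrt_sq (by positivity)
  rcases eq_or_lt_of_le (by positivity : (0:ℝ) ≤ δ + u) with h | h
  · have hδu : δ = 0 ∧ u = 0 := by constructor <;> linarith [hu0, hδ0]
    have ha0 : a = 0 := by
      have : |a| ≤ 0 := by rw [hδu.1] at ha; exact ha
      exact abs_eq_zero.mp (le_antisymm this (abs_nonneg a))
    simp [ha0, hδu.2, hδu.1]
    positivity
  · rw [div_le_iff₀ h]
    nlinarith [mul_nonneg (show 0 ≤ v - u by nlinarith) (show 0 ≤ u + δ - v by linarith),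
      sq_nonneg (v - u)]

lemma coord (T : ℕ) (δ : ℝ) (hδ0 : 0 ≤ δ) (a : ℕ → ℝ)
    (ha : ∀ t, t < T → |a t| ≤ δ) :
    ∑ t ∈ Finset.range T, (a t) ^ 2 / (δ + Real.sqrt (∑ j ∈ Finset.range t, (a j) ^ 2))
      ≤ 2 * Real.sqrt (∑ t ∈ Finset.range T, (a t) ^ 2) := by
  induction T with
  | zero => simp
  | succ n ih =>
    rw [Finset.sum_range_succ, Finset.sum_range_succ]
    have h1 := ih (fun t ht => ha t (ht.trans (Nat.lt_succ_self n)))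
    have h2 := key_step δ (∑ j ∈ Finset.range n, (a j) ^ 2) (a n) hδ0
      (Finset.sum_nonneg fun _ _ => sq_nonneg _) (ha n (Nat.lt_succ_self n))
    linarith

/-- AdaGrad potential inequality with lagged diagonal scaling `H_{t−1} = δI + diag(s_{t−1})`,
`s_{t,i} = ‖(g_{1,i},…,g_{t,i})‖₂`, for `δ ≥ max_t ‖g_t‖_∞`:
`Σ_t ‖g_t‖²_{H_{t−1}⁻¹} ≤ 2 Σ_i ‖(g_{1,i},…,g_{T,i})‖₂`. -/
theorem stmt_19 (d T : ℕ) (δ : ℝ) (hδ0 : 0 ≤ δ) (g : ℕ → Fin d → ℝ)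
    (hδ : ∀ t, t < T → ∀ i, |g t i| ≤ δ) :
    ∑ t ∈ Finset.range T, ∑ i : Fin d,
        (g t i) ^ 2 / (δ + Real.sqrt (∑ j ∈ Finset.range t, (g j i) ^ 2))
      ≤ 2 * ∑ i : Fin d, Real.sqrt (∑ t ∈ Finset.range T, (g t i) ^ 2) := by
  rw [Finset.sum_comm, Finset.mul_sum]
  exact Finset.sum_le_sum fun i _ => coord T δ hδ0 (fun t => g t i)
    (fun t ht => hδ t ht i)
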